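/- Let 1 ≤ p < ∞ with p ≠ 2, and let T be a bounded linear operator on real ℓ_p with numerical radius 0, i.e., x*(Tx) = 0 for every unit vector x and every norm-one functional x* with x*(x) = 1. Then T = 0. Hence the numerical radius is a norm on L(ℓ_p). -/

import Mathlib

open scoped ENNReal

/-- Auxiliary linear functional `y ↦ c * y m + d * y n` on `ℓ^p`. -/
noncomputable def lpTwoFunc (p : ℝ≥0∞) (c d : ℝ) (m n : ℕ) :
    lp (fun _ : ℕ => ℝ) p →ₗ[ℝ] ℝ where
  toFun y := c * (y : ∀ _ : ℕ, ℝ) m + d * (y : ∀ _ : ℕ, ℝ) n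
  map_add' y z := by
    simp only [lp.coeFn_add, Pi.add_apply]
    ring
  map_smul' s y := by
    simp only [lp.coeFn_smul, Pi.smul_apply, smul_eq_mul, RingHom.id_apply]
    ring

/-- Two-coordinate Hölder-type bound on `ℓ^p`. -/
theorem lpTwoBound (p : ℝ≥0∞) [Fact (1 ≤ p)] (hr1 : 1 ≤ p.toReal)
    {a b : ℝ} (ha : 0 < a) (hb : 0 < b)
    (hab : a ^ p.toReal + b ^ p.toReal = 1) {m n : ℕ} (hmn : m ≠ n)
    (y : lp (fun _ : ℕ => ℝ) p) :
    a ^ (p.toReal - 1) * |(y : ∀ _ : ℕ, ℝ) m| + b ^ (p.toReal - 1) * |(y : ∀ _ : ℕ, ℝ) n| ≤ ‖y‖ := by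
  set r := p.toReal with hrdef
  have hr0 : 0 < r := lt_of_lt_of_le one_pos hr1
  have key : |(y : ∀ _ : ℕ, ℝ) m| ^ r + |(y : ∀ _ : ℕ, ℝ) n| ^ r ≤ ‖y‖ ^ r := by
    have hs := lp.hasSum_norm hr0 y
    have h2 := sum_le_hasSum ({m, n} : Finset ℕ) (fun i _ => by positivity) hs
    rw [Finset.sum_pair hmn] at h2
    simpa [Real.norm_eq_abs] using h2
  have hynn : (0:ℝ) ≤ ‖y‖ := norm_nonneg y
  rcases eq_or_lt_of_le hr1 with hre | hrl
  · -- r = 1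
    rw [← hre] at key ⊢
    simpa [Real.rpow_one] using key
  · -- 1 < r, Hölder
    set q := Real.conjExponent r with hq
    have hpq : q.HolderConjugate r := (Real.HolderConjugate.conjExponent hrl).symm
    have hrne : r - 1 ≠ 0 := sub_ne_zero.mpr (ne_of_gt hrl)
    have hqr : (r - 1) * q = r := by
      rw [hq, Real.conjExponent]
      field_simp
    have H := Real.inner_le_Lp_mul_Lq ({m, n} : Finset ℕ)
      (fun i => if i = m then a ^ (r - 1) else b ^ (r - 1))
      (fun i => |(y : ∀ _ : ℕ, ℝ) i|) hpq
    rw [Finset.sum_pair hmn, Finset.sum_pair hmn, Finset.sum_pair hmn] at H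
    have hnm : ¬ (n = m) := fun hh => hmn hh.symm
    simp only [if_neg hnm, eq_self_iff_true, if_true, abs_abs] at H
    have e1 : |a ^ (r - 1)| ^ q = a ^ r := by
      rw [abs_of_pos (Real.rpow_pos_of_pos ha _), ← Real.rpow_mul ha.le, hqr]
    have e2 : |b ^ (r - 1)| ^ q = b ^ r := by
      rw [abs_of_pos (Real.rpow_pos_of_pos hb _), ← Real.rpow_mul hb.le, hqr]
    rw [e1, e2, hab, Real.one_rpow, one_mul] at H
    refine H.trans ?_
    calc (|(y : ∀ _ : ℕ, ℝ) m| ^ r + |(y : ∀ _ : ℕ, ℝ) n| ^ r) ^ (1 / r)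
        ≤ (‖y‖ ^ r) ^ (1 / r) := Real.rpow_le_rpow (by positivity) key (by positivity)
      _ = ‖y‖ := by rw [one_div, Real.rpow_rpow_inv hynn hr0.ne']


/-- The master equation coming from the numerical-radius-zero hypothesis, for a two-point
unit vector. -/
theorem lp_eqn (p : ℝ≥0∞) [Fact (1 ≤ p)] (hpt : p ≠ ⊤)
    (T : lp (fun _ : ℕ => ℝ) p →L[ℝ] lp (fun _ : ℕ => ℝ) p)
    (h : ∀ (x : lp (fun _ : ℕ => ℝ) p) (f : lp (fun _ : ℕ => ℝ) p →L[ℝ] ℝ),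
      ‖x‖ = 1 → ‖f‖ = 1 → f x = 1 → f (T x) = 0)
    {m n : ℕ} (hmn : m ≠ n) {a b : ℝ} (ha : 0 < a) (hb : 0 < b)
    (hab : a ^ p.toReal + b ^ p.toReal = 1) :
    a ^ (p.toReal - 1) * (a * (T (lp.single p m 1) : ∀ _ : ℕ, ℝ) m
        + b * (T (lp.single p n 1) : ∀ _ : ℕ, ℝ) m)
      + b ^ (p.toReal - 1) * (a * (T (lp.single p m 1) : ∀ _ : ℕ, ℝ) n
        + b * (T (lp.single p n 1) : ∀ _ : ℕ, ℝ) n) = 0 := by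
  set r := p.toReal with hrdef
  have hr1 : 1 ≤ r := by
    rw [hrdef, ← ENNReal.toReal_one]
    exact (ENNReal.toReal_le_toReal (by simp) hpt).mpr Fact.out
  have hr0 : 0 < r := lt_of_lt_of_le one_pos hr1
  set x : lp (fun _ : ℕ => ℝ) p := lp.single p m a + lp.single p n b with hxdef
  have hxm : (x : ∀ _ : ℕ, ℝ) m = a := by
    simp [hxdef, lp.coeFn_add, lp.single_apply_self, lp.single_apply_ne (E := fun _ : ℕ => ℝ) p n b hmn, Pi.single_apply, hmn, hmn.symm]
  have hxn : (x : ∀ _ : ℕ, ℝ) n = b := by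
    simp [hxdef, lp.coeFn_add, lp.single_apply_self, lp.single_apply_ne (E := fun _ : ℕ => ℝ) p m a hmn.symm, Pi.single_apply, hmn, hmn.symm]
  have hxnorm : ‖x‖ = 1 := by
    have hsum : x = ∑ i ∈ ({m, n} : Finset ℕ),
        lp.single p i (if i = m then a else b) := by
      rw [Finset.sum_pair hmn, if_pos rfl, if_neg (fun hh => hmn hh.symm)]
    have hn := lp.norm_sum_single hr0 (fun i => if i = m then a else b) ({m, n} : Finset ℕ)
    rw [← hsum, Finset.sum_pair hmn, if_pos rfl, if_neg (fun hh => hmn hh.symm)] at hn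
    rw [Real.norm_eq_abs, Real.norm_eq_abs, abs_of_pos ha, abs_of_pos hb, hab] at hn
    have := Real.rpow_left_injOn (x := r) hr0.ne'
    refine this (Set.mem_setOf.mpr (norm_nonneg x)) (Set.mem_setOf.mpr zero_le_one) ?_
    simpa [Real.one_rpow] using hn
  have hbd : ∀ y : lp (fun _ : ℕ => ℝ) p,
      ‖(lpTwoFunc p (a ^ (r - 1)) (b ^ (r - 1)) m n) y‖ ≤ 1 * ‖y‖ := by
    intro y
    rw [one_mul, Real.norm_eq_abs]
    have hA : 0 < a ^ (r - 1) := Real.rpow_pos_of_pos ha _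
    have hB : 0 < b ^ (r - 1) := Real.rpow_pos_of_pos hb _
    calc |a ^ (r - 1) * (y : ∀ _ : ℕ, ℝ) m + b ^ (r - 1) * (y : ∀ _ : ℕ, ℝ) n|
        ≤ |a ^ (r - 1) * (y : ∀ _ : ℕ, ℝ) m| + |b ^ (r - 1) * (y : ∀ _ : ℕ, ℝ) n| := abs_add_le _ _
      _ = a ^ (r - 1) * |(y : ∀ _ : ℕ, ℝ) m| + b ^ (r - 1) * |(y : ∀ _ : ℕ, ℝ) n| := by
          rw [abs_mul, abs_mul, abs_of_pos hA, abs_of_pos hB]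
      _ ≤ ‖y‖ := lpTwoBound p hr1 ha hb hab hmn y
  set f : lp (fun _ : ℕ => ℝ) p →L[ℝ] ℝ :=
    (lpTwoFunc p (a ^ (r - 1)) (b ^ (r - 1)) m n).mkContinuous 1 hbd with hfdef
  have hfapp : ∀ y : lp (fun _ : ℕ => ℝ) p,
      f y = a ^ (r - 1) * (y : ∀ _ : ℕ, ℝ) m + b ^ (r - 1) * (y : ∀ _ : ℕ, ℝ) n := fun y => rfl
  have hra : a ^ (r - 1) * a = a ^ r := by
    rw [← Real.rpow_add_one (ne_of_gt ha), sub_add_cancel]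
  have hrb : b ^ (r - 1) * b = b ^ r := by
    rw [← Real.rpow_add_one (ne_of_gt hb), sub_add_cancel]
  have hfx : f x = 1 := by rw [hfapp, hxm, hxn, hra, hrb, hab]
  have hfnorm : ‖f‖ = 1 := by
    refine le_antisymm (LinearMap.mkContinuous_norm_le _ zero_le_one _) ?_
    have := f.le_opNorm x
    rw [hxnorm, mul_one, hfx] at this
    simpa using this
  have h0 := h x f hxnorm hfnorm hfx
  rw [hfapp] at h0
  have hx2 : x = a • lp.single p m 1 + b • lp.single p n 1 := by
    rw [hxdef, ← lp.single_smul, ← lp.single_smul, smul_eq_mul, mul_one, smul_eq_mul, mul_one]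
  have hTx : T x = a • T (lp.single p m 1) + b • T (lp.single p n 1) := by
    rw [hx2, map_add, map_smul, map_smul]
  rw [hTx] at h0
  have e : ∀ i, ((a • T (lp.single p m 1) + b • T (lp.single p n 1) : lp (fun _ : ℕ => ℝ) p) : ∀ _ : ℕ, ℝ) i
      = a * (T (lp.single p m 1) : ∀ _ : ℕ, ℝ) i + b * (T (lp.single p n 1) : ∀ _ : ℕ, ℝ) i := fun i => rfl
  rw [e m, e n] at h0
  simpa [lp.coeFn_add, lp.coeFn_smul, Pi.add_apply, Pi.smul_apply, smul_eq_mul] using h0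

/-- The diagonal entries vanish. -/
theorem lp_diag (p : ℝ≥0∞) [Fact (1 ≤ p)] (hpt : p ≠ ⊤)
    (T : lp (fun _ : ℕ => ℝ) p →L[ℝ] lp (fun _ : ℕ => ℝ) p)
    (h : ∀ (x : lp (fun _ : ℕ => ℝ) p) (f : lp (fun _ : ℕ => ℝ) p →L[ℝ] ℝ),
      ‖x‖ = 1 → ‖f‖ = 1 → f x = 1 → f (T x) = 0)
    (n : ℕ) : (T (lp.single p n 1) : ∀ _ : ℕ, ℝ) n = 0 := by
  have hp0 : p ≠ 0 := by
    have : (1 : ℝ≥0∞) ≤ p := Fact.out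
    intro hh; rw [hh] at this; simp at this
  have hr0 : 0 < p.toReal := ENNReal.toReal_pos hp0 hpt
  set x : lp (fun _ : ℕ => ℝ) p := lp.single p n 1 with hxdef
  have hxnorm : ‖x‖ = 1 := by
    simpa using lp.norm_single (E := fun _ : ℕ => ℝ) (pos_iff_ne_zero.mpr hp0) n (1 : ℝ)
  have hbd : ∀ y : lp (fun _ : ℕ => ℝ) p,
      ‖(lpTwoFunc p 1 0 n n) y‖ ≤ 1 * ‖y‖ := by
    intro y
    have := lp.norm_apply_le_norm hp0 y n
    rw [Real.norm_eq_abs] at this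
    simpa [lpTwoFunc, Real.norm_eq_abs] using this
  set f : lp (fun _ : ℕ => ℝ) p →L[ℝ] ℝ := (lpTwoFunc p 1 0 n n).mkContinuous 1 hbd with hfdef
  have hfapp : ∀ y : lp (fun _ : ℕ => ℝ) p,
      f y = 1 * (y : ∀ _ : ℕ, ℝ) n + 0 * (y : ∀ _ : ℕ, ℝ) n := fun y => rfl
  have hfx : f x = 1 := by
    rw [hfapp]
    simp [hxdef, lp.single_apply_self]
  have hfnorm : ‖f‖ = 1 := by
    refine le_antisymm (LinearMap.mkContinuous_norm_le _ zero_le_one _) ?_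
    have := f.le_opNorm x
    rw [hxnorm, mul_one, hfx] at this
    simpa using this
  have h0 := h x f hxnorm hfnorm hfx
  rw [hfapp] at h0
  simpa using h0

theorem lp_numerical_radius_zero (p : ENNReal) [Fact (1 ≤ p)] (hp2 : p ≠ 2) (hpt : p ≠ ⊤)
    (T : lp (fun _ : ℕ => ℝ) p →L[ℝ] lp (fun _ : ℕ => ℝ) p)
    (h : ∀ (x : lp (fun _ : ℕ => ℝ) p) (f : lp (fun _ : ℕ => ℝ) p →L[ℝ] ℝ),
      ‖x‖ = 1 → ‖f‖ = 1 → f x = 1 → f (T x) = 0) :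
    T = 0 := by
  classical
  set r := p.toReal with hrdef
  have hr1 : 1 ≤ r := by
    rw [hrdef, ← ENNReal.toReal_one]
    exact (ENNReal.toReal_le_toReal (by simp) hpt).mpr Fact.out
  have hr0 : 0 < r := lt_of_lt_of_le one_pos hr1
  have hr2 : r ≠ 2 := by
    intro hh
    exact hp2 ((ENNReal.toReal_eq_toReal_iff' hpt (by norm_num)).mp (by simpa using hh))
  -- off-diagonal entries vanish
  have offdiag : ∀ m n : ℕ, m ≠ n → (T (lp.single p n 1) : ∀ _ : ℕ, ℝ) m = 0 := by
    intro m n hmn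
    set A := (T (lp.single p n 1) : ∀ _ : ℕ, ℝ) m with hA
    set B := (T (lp.single p m 1) : ∀ _ : ℕ, ℝ) n with hB
    have hdm := lp_diag p hpt T h m
    have hdn := lp_diag p hpt T h n
    -- first instance: a = b
    have hc : (0:ℝ) < (2:ℝ)⁻¹ ^ r⁻¹ := Real.rpow_pos_of_pos (by norm_num) _
    have hcr : ((2:ℝ)⁻¹ ^ r⁻¹) ^ r = 2⁻¹ := Real.rpow_inv_rpow (by norm_num) hr0.ne'
    have e1 := lp_eqn p hpt T h hmn hc hc (by rw [hcr]; norm_num)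
    rw [hdm, hdn, ← hrdef] at e1
    have hAB : A + B = 0 := by
      have hpos : (0:ℝ) < ((2:ℝ)⁻¹ ^ r⁻¹) ^ (r - 1) * ((2:ℝ)⁻¹ ^ r⁻¹) :=
        mul_pos (Real.rpow_pos_of_pos hc _) hc
      have hmul : ((2:ℝ)⁻¹ ^ r⁻¹) ^ (r - 1) * ((2:ℝ)⁻¹ ^ r⁻¹) * (A + B) = 0 := by
        rw [hA, hB]; linear_combination e1
      exact (mul_eq_zero.mp hmul).resolve_left (ne_of_gt hpos)
    -- second instance: a ≠ b
    set a := (4:ℝ)⁻¹ ^ r⁻¹ with hadef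
    set b := ((3:ℝ)/4) ^ r⁻¹ with hbdef
    have ha : (0:ℝ) < a := Real.rpow_pos_of_pos (by norm_num) _
    have hb : (0:ℝ) < b := Real.rpow_pos_of_pos (by norm_num) _
    have har : a ^ r = 4⁻¹ := Real.rpow_inv_rpow (by norm_num) hr0.ne'
    have hbr : b ^ r = 3/4 := Real.rpow_inv_rpow (by norm_num) hr0.ne'
    have e2 := lp_eqn p hpt T h hmn ha hb (by rw [har, hbr]; norm_num)
    rw [hdm, hdn, ← hrdef] at e2
    have e2' : a ^ (r - 1) * b * A + b ^ (r - 1) * a * B = 0 := by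
      rw [hA, hB]; linear_combination e2
    have hBA : B = -A := by linarith [hAB]
    rw [hBA] at e2'
    have e3 : (a ^ (r - 1) * b - b ^ (r - 1) * a) * A = 0 := by linear_combination e2'
    have hne : a ^ (r - 1) * b ≠ b ^ (r - 1) * a := by
      intro heq
      have hla : Real.log a = r⁻¹ * Real.log 4⁻¹ := Real.log_rpow (by norm_num) _
      have hlb : Real.log b = r⁻¹ * Real.log (3/4) := Real.log_rpow (by norm_num) _
      have hlog : Real.log (a ^ (r - 1) * b) = Real.log (b ^ (r - 1) * a) := by rw [heq]
      rw [Real.log_mul (ne_of_gt (Real.rpow_pos_of_pos ha _)) (ne_of_gt hb),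
        Real.log_mul (ne_of_gt (Real.rpow_pos_of_pos hb _)) (ne_of_gt ha),
        Real.log_rpow ha, Real.log_rpow hb] at hlog
      have hfac : (r - 2) * (Real.log a - Real.log b) = 0 := by linarith
      have hll : Real.log a = Real.log b := by
        rcases mul_eq_zero.mp hfac with hc1 | hc2
        · exact absurd (by linarith : r = 2) hr2
        · linarith
      rw [hla, hlb] at hll
      have : Real.log 4⁻¹ = Real.log (3/4) :=
        mul_left_cancel₀ (inv_ne_zero hr0.ne') hll
      have hlt : Real.log (4⁻¹ : ℝ) < Real.log (3/4 : ℝ) :=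
        Real.log_lt_log (by norm_num) (by norm_num)
      linarith
    have : a ^ (r - 1) * b - b ^ (r - 1) * a ≠ 0 := sub_ne_zero.mpr hne
    have hA0 : A = 0 := (mul_eq_zero.mp e3).resolve_left this
    exact hA0
  -- all basis images vanish
  have hS : ∀ k : ℕ, T (lp.single p k 1) = 0 := by
    intro k
    ext i
    rcases eq_or_ne i k with rfl | hik
    · simpa using lp_diag p hpt T h i
    · simpa using offdiag i k hik
  -- conclude by density
  refine ContinuousLinearMap.ext fun x => ?_
  have hsum := lp.hasSum_single hpt x
  have hTsum := T.hasSum hsum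
  have hz : (fun i : ℕ => T (lp.single p i ((x : ∀ _ : ℕ, ℝ) i))) =
      fun _ : ℕ => (0 : lp (fun _ : ℕ => ℝ) p) := by
    funext i
    have hsm : lp.single p i ((x : ∀ _ : ℕ, ℝ) i) =
        ((x : ∀ _ : ℕ, ℝ) i) • lp.single (E := fun _ : ℕ => ℝ) p i (1 : ℝ) := by
      rw [← lp.single_smul, smul_eq_mul, mul_one]
    rw [hsm, map_smul, hS i, smul_zero]
  rw [hz] at hTsum
  have hTx0 : T x = 0 := hTsum.unique hasSum_zero
  rw [ContinuousLinearMap.zero_apply, hTx0]
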